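/- Let f : [0,1] → ℝ be continuous. Then for every x ∈ [0,1] the function t ↦ u1(x,t) is Lebesgue integrable on [0,∞) and ∫_0^∞ |u1(x,t)| dt ≤ ‖f‖_∞ / 3, where ‖f‖_∞ = sup_{y∈[0,1]} |f(y)|. -/

import Mathlib

open MeasureTheory Set
open scoped Real

lemma integral_exp_neg_mul_Ioi' {b : ℝ} (hb : 0 < b) :
    ∫ t in Set.Ioi (0:ℝ), Real.exp (-(b * t)) = 1 / b := by
  have h := integral_comp_mul_left_Ioi (fun x => Real.exp (-x)) 0 hb
  simp only [mul_zero] at h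
  rw [h, integral_exp_neg_Ioi_zero, smul_eq_mul, mul_one, one_div]

lemma main_aux (c s : ℕ → ℝ) (M : ℝ) (hM : 0 ≤ M) (hc : ∀ n, |c n| ≤ M)
    (hs : ∀ n, |s n| ≤ 1) :
    IntegrableOn (fun t : ℝ => 2 * ∑' n : ℕ,
        c n * Real.exp (-(((n : ℝ) + 1) ^ 2) * π ^ 2 * t) * s n) (Set.Ici 0) ∧
      ∫ t in Set.Ici (0:ℝ),
        |2 * ∑' n : ℕ, c n * Real.exp (-(((n : ℝ) + 1) ^ 2) * π ^ 2 * t) * s n| ≤ M / 3 := by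
  set E : ℕ → ℝ → ℝ := fun n t => Real.exp (-(((n : ℝ) + 1) ^ 2) * π ^ 2 * t) with hE
  have hπ : (0:ℝ) < π ^ 2 := by positivity
  have hb : ∀ n : ℕ, (0:ℝ) < ((n : ℝ) + 1) ^ 2 * π ^ 2 := fun n => by positivity
  have hEeq : ∀ n t, E n t = Real.exp (-((((n : ℝ) + 1) ^ 2 * π ^ 2) * t)) := by
    intro n t; simp only [hE]; congr 1; ring
  have hEpos : ∀ n t, 0 < E n t := fun n t => Real.exp_pos _
  have hEcont : ∀ n, Continuous (E n) := by
    intro n; simp only [hE]; fun_prop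
  have hEmono : ∀ (n : ℕ) ⦃a t : ℝ⦄, a ≤ t → E n t ≤ E n a := by
    intro n a t hat
    rw [hEeq, hEeq]
    exact Real.exp_le_exp.2 (by nlinarith [hb n])
  have hsum : ∀ {t : ℝ}, 0 < t → Summable (fun n => E n t) := by
    intro t ht
    have hr1 : Real.exp (-(π ^ 2 * t)) < 1 := by
      rw [Real.exp_lt_one_iff]; nlinarith
    refine Summable.of_nonneg_of_le (fun n => (hEpos n t).le) (fun n => ?_)
      ((summable_geometric_of_lt_one (Real.exp_nonneg _) hr1).mul_left (Real.exp (-(π ^ 2 * t))))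
    have h1 : Real.exp (-(π ^ 2 * t)) * Real.exp (-(π ^ 2 * t)) ^ n
        = Real.exp (-(((n : ℝ) + 1) * (π ^ 2 * t))) := by
      rw [← Real.exp_nat_mul, ← Real.exp_add]; ring_nf
    rw [hEeq, h1]
    apply Real.exp_le_exp.2
    have h2 : ((n : ℝ) + 1) ≤ ((n : ℝ) + 1) ^ 2 := by nlinarith [Nat.cast_nonneg (α := ℝ) n]
    nlinarith [mul_pos hπ ht, mul_nonneg (sub_nonneg.2 h2) (mul_pos hπ ht).le]
  have hterm : ∀ (t : ℝ) (n : ℕ), |c n * E n t * s n| ≤ M * E n t := by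
    intro t n
    rw [abs_mul, abs_mul, abs_of_pos (hEpos n t)]
    calc |c n| * E n t * |s n| ≤ M * E n t * 1 := by
          apply mul_le_mul (mul_le_mul_of_nonneg_right (hc n) (hEpos n t).le) (hs n)
            (abs_nonneg _) (by positivity)
      _ = M * E n t := mul_one _
  have hsumabs : ∀ {t : ℝ}, 0 < t → Summable (fun n => |c n * E n t * s n|) := fun {t} ht =>
    Summable.of_nonneg_of_le (fun n => abs_nonneg _) (fun n => hterm t n) ((hsum ht).mul_left M)
  have hcont : ∀ ε : ℝ, 0 < ε →
      ContinuousOn (fun t => ∑' n, c n * E n t * s n) (Set.Ici ε) := by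
    intro ε hε
    refine continuousOn_tsum (fun n => (Continuous.continuousOn (by fun_prop)))
      ((hsum hε).mul_left M) ?_
    intro n t ht
    rw [Real.norm_eq_abs]
    exact (hterm t n).trans (mul_le_mul_of_nonneg_left (hEmono n ht) hM)
  have hset : Set.Ioi (0:ℝ) = ⋃ k : ℕ, Set.Ici (((k : ℝ) + 1)⁻¹) := by
    ext t
    simp only [Set.mem_Ioi, Set.mem_iUnion, Set.mem_Ici]
    constructor
    · intro ht
      obtain ⟨k, hk⟩ := exists_nat_one_div_lt ht
      exact ⟨k, by rw [one_div] at hk; exact hk.le⟩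
    · rintro ⟨k, hk⟩
      exact lt_of_lt_of_le (by positivity) hk
  have hmeas : AEStronglyMeasurable (fun t => 2 * ∑' n, c n * E n t * s n)
      (volume.restrict (Set.Ioi 0)) := by
    rw [hset, aestronglyMeasurable_iUnion_iff]
    intro k
    exact (continuousOn_const.mul (hcont _ (by positivity))).aestronglyMeasurable
      measurableSet_Ici
  have hbound : ∀ t : ℝ, 0 < t →
      |2 * ∑' n, c n * E n t * s n| ≤ ∑' n, 2 * M * E n t := by
    intro t ht
    rw [abs_mul, abs_two]
    have h1 : |∑' n, c n * E n t * s n| ≤ ∑' n, |c n * E n t * s n| := by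
      have := norm_tsum_le_tsum_norm (f := fun n => c n * E n t * s n)
        (by simpa only [Real.norm_eq_abs] using hsumabs ht)
      simpa only [Real.norm_eq_abs] using this
    have h2 : ∑' n, |c n * E n t * s n| ≤ ∑' n, M * E n t :=
      Summable.tsum_le_tsum (fun n => hterm t n) (hsumabs ht) ((hsum ht).mul_left M)
    calc 2 * |∑' n, c n * E n t * s n| ≤ 2 * ∑' n, M * E n t := by
          have := h1.trans h2; nlinarith
      _ = ∑' n, 2 * M * E n t := by
          rw [tsum_mul_left, tsum_mul_left, ← mul_assoc]
  have hIE : ∀ n, IntegrableOn (fun t => E n t) (Set.Ioi (0:ℝ)) := by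
    intro n
    have h := exp_neg_integrableOn_Ioi 0 (hb n)
    refine h.congr (Filter.Eventually.of_forall fun t => ?_)
    show Real.exp _ = E n t
    rw [hEeq]; congr 1; ring
  have hIval : ∀ n : ℕ, ∫ t in Set.Ioi (0:ℝ), 2 * M * E n t
      = 2 * M * (1 / (((n : ℝ) + 1) ^ 2 * π ^ 2)) := by
    intro n
    rw [MeasureTheory.integral_const_mul]
    congr 1
    calc ∫ t in Set.Ioi (0:ℝ), E n t
        = ∫ t in Set.Ioi (0:ℝ), Real.exp (-((((n : ℝ) + 1) ^ 2 * π ^ 2) * t)) := by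
          simp_rw [hEeq]
      _ = 1 / (((n : ℝ) + 1) ^ 2 * π ^ 2) := integral_exp_neg_mul_Ioi' (hb n)
  have hB : HasSum (fun n : ℕ => 2 * M * (1 / (((n : ℝ) + 1) ^ 2 * π ^ 2))) (M / 3) := by
    have h0 : HasSum (fun n : ℕ => (1:ℝ) / ((n : ℝ) + 1) ^ 2) (π ^ 2 / 6) := by
      have h1 := (hasSum_nat_add_iff (f := fun n : ℕ => (1:ℝ) / (n : ℝ) ^ 2) 1).mpr
        (by simpa using hasSum_zeta_two)
      push_cast at h1
      exact h1
    have h2 := h0.mul_left (2 * M / π ^ 2)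
    have hfe : (fun n : ℕ => (2 * M / π ^ 2) * ((1:ℝ) / ((n : ℝ) + 1) ^ 2))
        = fun n : ℕ => 2 * M * (1 / (((n : ℝ) + 1) ^ 2 * π ^ 2)) := by
      funext n
      rw [mul_one_div, mul_one_div, div_div, mul_comm (π ^ 2) (((n : ℝ) + 1) ^ 2)]
    rw [hfe] at h2
    have hv : 2 * M / π ^ 2 * (π ^ 2 / 6) = M / 3 := by field_simp; ring
    rwa [hv] at h2
  have key : ∫⁻ t in Set.Ioi (0:ℝ), ENNReal.ofReal |2 * ∑' n, c n * E n t * s n|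
      ≤ ENNReal.ofReal (M / 3) := by
    have step1 : ∫⁻ t in Set.Ioi (0:ℝ), ENNReal.ofReal |2 * ∑' n, c n * E n t * s n|
        ≤ ∫⁻ t in Set.Ioi (0:ℝ), ∑' n, ENNReal.ofReal (2 * M * E n t) := by
      refine lintegral_mono_ae ?_
      filter_upwards [ae_restrict_mem measurableSet_Ioi] with t ht
      calc ENNReal.ofReal |2 * ∑' n, c n * E n t * s n|
          ≤ ENNReal.ofReal (∑' n, 2 * M * E n t) := ENNReal.ofReal_le_ofReal (hbound t ht)
        _ = ∑' n, ENNReal.ofReal (2 * M * E n t) :=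
            ENNReal.ofReal_tsum_of_nonneg (fun n => by positivity)
              ((hsum ht).mul_left (2 * M))
    have step2 : ∫⁻ t in Set.Ioi (0:ℝ), ∑' n, ENNReal.ofReal (2 * M * E n t)
        = ∑' n, ∫⁻ t in Set.Ioi (0:ℝ), ENNReal.ofReal (2 * M * E n t) :=
      lintegral_tsum (fun n => (ENNReal.measurable_ofReal.comp
        (continuous_const.mul (hEcont n)).measurable).aemeasurable)
    have step3 : ∀ n : ℕ, ∫⁻ t in Set.Ioi (0:ℝ), ENNReal.ofReal (2 * M * E n t)
        = ENNReal.ofReal (2 * M * (1 / (((n : ℝ) + 1) ^ 2 * π ^ 2))) := by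
      intro n
      rw [← ofReal_integral_eq_lintegral_ofReal ((hIE n).const_mul (2 * M))
        (Filter.Eventually.of_forall fun t => by positivity), hIval n]
    refine step1.trans ?_
    rw [step2, tsum_congr step3,
      ← ENNReal.ofReal_tsum_of_nonneg (fun n => by positivity) hB.summable, hB.tsum_eq]
  have hInt1 : IntegrableOn (fun t => 2 * ∑' n, c n * E n t * s n) (Set.Ioi 0) := by
    refine ⟨hmeas, ?_⟩
    rw [hasFiniteIntegral_iff_norm]
    calc ∫⁻ t in Set.Ioi (0:ℝ), ENNReal.ofReal ‖2 * ∑' n, c n * E n t * s n‖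
        ≤ ENNReal.ofReal (M / 3) := by simpa only [Real.norm_eq_abs] using key
      _ < ⊤ := ENNReal.ofReal_lt_top
  constructor
  · exact (integrableOn_Ici_iff_integrableOn_Ioi).mpr hInt1
  · rw [integral_Ici_eq_integral_Ioi]
    have habs : AEStronglyMeasurable (fun t => |2 * ∑' n, c n * E n t * s n|)
        (volume.restrict (Set.Ioi 0)) := by
      simpa only [Real.norm_eq_abs] using hmeas.norm
    rw [integral_eq_lintegral_of_nonneg_ae
      (Filter.Eventually.of_forall fun t => abs_nonneg _) habs]
    have h := ENNReal.toReal_mono ENNReal.ofReal_ne_top key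
    rwa [ENNReal.toReal_ofReal (by linarith : (0:ℝ) ≤ M / 3)] at h

/-- `u1 f x t = 2 Σ_{n=1}^∞ (∫_0^1 f(y) sin(nπy) dy) e^{−n²π²t} sin(nπx)`. -/
noncomputable def u1 (f : ℝ → ℝ) (x t : ℝ) : ℝ :=
  2 * ∑' n : ℕ,
    (∫ y in (0:ℝ)..1, f y * Real.sin (((n : ℝ) + 1) * π * y)) *
      Real.exp (-(((n : ℝ) + 1) ^ 2) * π ^ 2 * t) * Real.sin (((n : ℝ) + 1) * π * x)

/-- If `f : [0,1] → ℝ` is continuous, then for every `x ∈ [0,1]`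
the function `t ↦ u1 f x t` is Lebesgue integrable on `[0,∞)` and
`∫_0^∞ |u1 f x t| dt ≤ ‖f‖_∞ / 3`, where `‖f‖_∞ = sup_{y ∈ [0,1]} |f y|`. -/
theorem u1_integrable_and_bound
    (f : ℝ → ℝ) (hf : ContinuousOn f (Set.Icc 0 1))
    (x : ℝ) (hx : x ∈ Set.Icc (0 : ℝ) 1) :
    IntegrableOn (fun t : ℝ => u1 f x t) (Set.Ici 0) ∧
      ∫ t in Set.Ici (0 : ℝ), |u1 f x t| ≤ (⨆ y : Set.Icc (0 : ℝ) 1, |f y|) / 3 := by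
  set M := ⨆ y : Set.Icc (0:ℝ) 1, |f y| with hMdef
  have hbdd : BddAbove (Set.range fun y : Set.Icc (0:ℝ) 1 => |f y|) := by
    have h := (isCompact_Icc (a := (0:ℝ)) (b := 1)).bddAbove_image hf.abs
    rwa [Set.image_eq_range] at h
  have hfM : ∀ y ∈ Set.Icc (0:ℝ) 1, |f y| ≤ M := fun y hy => le_ciSup hbdd ⟨y, hy⟩
  have hM0 : 0 ≤ M := le_trans (abs_nonneg (f 0)) (hfM 0 (by norm_num))
  have hc : ∀ n : ℕ, |∫ y in (0:ℝ)..1, f y * Real.sin (((n : ℝ) + 1) * π * y)| ≤ M := by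
    intro n
    have h := intervalIntegral.norm_integral_le_of_norm_le_const (C := M)
      (a := (0:ℝ)) (b := 1)
      (f := fun y => f y * Real.sin (((n : ℝ) + 1) * π * y)) ?_
    · simpa using h
    · intro y hy
      rw [Set.uIoc_of_le (by norm_num : (0:ℝ) ≤ 1)] at hy
      rw [Real.norm_eq_abs, abs_mul]
      have h1 : |f y| ≤ M := hfM y (Set.Ioc_subset_Icc_self hy)
      have h2 : |Real.sin (((n : ℝ) + 1) * π * y)| ≤ 1 :=
        abs_le.2 ⟨Real.neg_one_le_sin _, Real.sin_le_one _⟩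
      nlinarith [abs_nonneg (f y), abs_nonneg (Real.sin (((n : ℝ) + 1) * π * y))]
  have hs : ∀ n : ℕ, |Real.sin (((n : ℝ) + 1) * π * x)| ≤ 1 := fun n =>
    abs_le.2 ⟨Real.neg_one_le_sin _, Real.sin_le_one _⟩
  simp only [u1]
  exact main_aux (fun n => ∫ y in (0:ℝ)..1, f y * Real.sin (((n : ℝ) + 1) * π * y))
    (fun n => Real.sin (((n : ℝ) + 1) * π * x)) M hM0 hc hs
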